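/- Fix λ > 0 and define L(S,P) = (1/λ)·(1 − √(1 − 2λS − λ²P²)) on the open set of (S,P) ∈ ℝ² where P ≠ 0 and 1 − 2λS − λ²P² > 0. Then L satisfies the self-duality equation L_S² − (2S/P)·L_S·L_P − L_P² = 1 at every point of this set. -/

import Mathlib

/-- The Born-Infeld Lagrangian satisfies the self-duality equation on its domain. -/
theorem born_infeld_self_dual (lam : ℝ) (hlam : 0 < lam) (L : ℝ → ℝ → ℝ)
    (hL : ∀ S P : ℝ, L S P =
      (1 / lam) * (1 - Real.sqrt (1 - 2 * lam * S - lam ^ 2 * P ^ 2))) :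
    ∀ S P : ℝ, P ≠ 0 → 1 - 2 * lam * S - lam ^ 2 * P ^ 2 > 0 →
      (deriv (fun s => L s P) S) ^ 2
        - (2 * S / P) * deriv (fun s => L s P) S * deriv (fun t => L S t) P
        - (deriv (fun t => L S t) P) ^ 2 = 1 := by
  intro S P hP hQ
  set Q : ℝ := 1 - 2 * lam * S - lam ^ 2 * P ^ 2 with hQdef
  have hsq : Real.sqrt Q ≠ 0 := ne_of_gt (Real.sqrt_pos.mpr hQ)
  have hQne : Q ≠ 0 := ne_of_gt hQ
  have hlamne : lam ≠ 0 := ne_of_gt hlam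
  -- derivative in S
  have h1 : HasDerivAt (fun s : ℝ => 1 - 2 * lam * s - lam ^ 2 * P ^ 2)
      (-(2 * lam)) S := by
    have := ((hasDerivAt_id S).const_mul (2 * lam)).const_sub 1
    simpa using this.sub_const (lam ^ 2 * P ^ 2)
  have hs1 : HasDerivAt (fun s : ℝ => Real.sqrt (1 - 2 * lam * s - lam ^ 2 * P ^ 2))
      ((1 / (2 * Real.sqrt Q)) * (-(2 * lam))) S := by
    simpa [Function.comp_def] using (Real.hasDerivAt_sqrt hQne).comp S h1
  have hLS : HasDerivAt (fun s => L s P)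
      ((1 / lam) * (-((1 / (2 * Real.sqrt Q)) * (-(2 * lam))))) S := by
    have h : HasDerivAt (fun s : ℝ =>
        (1 / lam) * (1 - Real.sqrt (1 - 2 * lam * s - lam ^ 2 * P ^ 2)))
        ((1 / lam) * (-((1 / (2 * Real.sqrt Q)) * (-(2 * lam))))) S := by
      simpa using (hs1.const_sub 1).const_mul (1 / lam)
    exact h.congr_of_eventuallyEq (Filter.Eventually.of_forall fun s => hL s P)
  -- derivative in P
  have h2 : HasDerivAt (fun t : ℝ => 1 - 2 * lam * S - lam ^ 2 * t ^ 2)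
      (-(lam ^ 2 * (2 * P))) P := by
    have := ((hasDerivAt_pow 2 P).const_mul (lam ^ 2)).const_sub (1 - 2 * lam * S)
    simpa [mul_comm, mul_assoc, sub_sub] using this
  have hs2 : HasDerivAt (fun t : ℝ => Real.sqrt (1 - 2 * lam * S - lam ^ 2 * t ^ 2))
      ((1 / (2 * Real.sqrt Q)) * (-(lam ^ 2 * (2 * P)))) P := by
    simpa [Function.comp_def] using (Real.hasDerivAt_sqrt hQne).comp P h2
  have hLP : HasDerivAt (fun t => L S t)
      ((1 / lam) * (-((1 / (2 * Real.sqrt Q)) * (-(lam ^ 2 * (2 * P)))))) P := by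
    have h : HasDerivAt (fun t : ℝ =>
        (1 / lam) * (1 - Real.sqrt (1 - 2 * lam * S - lam ^ 2 * t ^ 2)))
        ((1 / lam) * (-((1 / (2 * Real.sqrt Q)) * (-(lam ^ 2 * (2 * P)))))) P := by
      simpa using (hs2.const_sub 1).const_mul (1 / lam)
    exact h.congr_of_eventuallyEq (Filter.Eventually.of_forall fun t => hL S t)
  have hsqsq : Real.sqrt Q ^ 2 = Q := Real.sq_sqrt hQ.le
  clear_value Q
  have e1 : (1 / lam) * (-((1 / (2 * Real.sqrt Q)) * (-(2 * lam)))) = 1 / Real.sqrt Q := by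
    field_simp
  have e2 : (1 / lam) * (-((1 / (2 * Real.sqrt Q)) * (-(lam ^ 2 * (2 * P))))) =
      lam * P / Real.sqrt Q := by
    field_simp
  rw [hLS.deriv, hLP.deriv, e1, e2, div_pow, div_pow, one_pow, mul_pow, hsqsq]
  have e3 : 2 * S / P * (1 / Real.sqrt Q) * (lam * P / Real.sqrt Q) = 2 * S * lam / Q := by
    field_simp
    linear_combination (-S) * hsqsq
  rw [e3]
  field_simp
  linarith [hQdef]
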